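/- Let a = r/s ∈ ℚ with gcd(r,s) = 1, s > 0, let c = -a - a², and f(x) = x² + c. Then for every n ≥ 0, the denominator of f^n(0) - a in lowest terms is s^(2^n). Equivalently, writing f^n(0) - a = r_n/s_n in lowest terms with s_n > 0, one has s_n = s^(2^n). -/

import Mathlib

theorem stmt4 (r s : ℤ) (hco : Int.gcd r s = 1) (hs : 0 < s)
    (a : ℚ) (ha : a = (r : ℚ) / (s : ℚ)) (c : ℚ) (hc : c = -a - a^2)
    (f : ℚ → ℚ) (hf : ∀ x, f x = x^2 + c) :
    ∀ n : ℕ, ((f^[n] 0 - a).den : ℤ) = s ^ (2 ^ n) := by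
  have hsQ : (s : ℚ) ≠ 0 := by exact_mod_cast hs.ne'
  have hcop : IsCoprime r s := Int.isCoprime_iff_gcd_eq_one.mpr hco
  have key : ∀ n : ℕ, ∃ p : ℤ, IsCoprime p s ∧ (n = 0 → p = -r) ∧
      f^[n] 0 - a = (p : ℚ) / (s : ℚ) ^ (2 ^ n) := by
    intro n
    induction n with
    | zero =>
      refine ⟨-r, hcop.neg_left, fun _ => rfl, ?_⟩
      simp [ha, neg_div]
    | succ n ih =>
      obtain ⟨p, hp, hp0, heq⟩ := ih
      obtain ⟨k, hk⟩ : ∃ k, 2 ^ n = k + 1 :=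
        ⟨2 ^ n - 1, (Nat.succ_pred_eq_of_pos (pow_pos (by norm_num : (0:ℕ) < 2) n)).symm⟩
      refine ⟨p ^ 2 + 2 * r * p * s ^ k - 2 * r * s ^ (2 * k + 1), ?_, by simp, ?_⟩
      · rcases Nat.eq_zero_or_pos n with hn | hn
        · subst hn
          have hk0 : k = 0 := by omega
          subst hk0
          have hp' : p = -r := hp0 rfl
          subst hp'
          have : (-r) ^ 2 + 2 * r * -r * s ^ 0 - 2 * r * s ^ (2 * 0 + 1)
              = -(r * r) + s * (-(2 * r)) := by ring
          rw [this]
          exact ((hcop.mul_left hcop).neg_left.add_mul_left_left _)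
        · obtain ⟨k', hk'⟩ : ∃ k', k = k' + 1 := by
            refine ⟨k - 1, ?_⟩
            have : 2 ≤ 2 ^ n := by
              calc 2 = 2 ^ 1 := rfl
              _ ≤ 2 ^ n := Nat.pow_le_pow_right (by norm_num) hn
            omega
          subst hk'
          have : p ^ 2 + 2 * r * p * s ^ (k' + 1) - 2 * r * s ^ (2 * (k' + 1) + 1)
              = p * p + s * (2 * r * p * s ^ k' - 2 * r * s ^ (2 * (k' + 1))) := by ring
          rw [this]
          exact (hp.mul_left hp).add_mul_left_left _
      · have hiter : f^[n + 1] 0 = f (f^[n] 0) := Function.iterate_succ_apply' f n 0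
        have hg : f^[n] 0 = (p : ℚ) / (s : ℚ) ^ (2 ^ n) + a := by
          linear_combination heq
        rw [hiter, hf, hg, hc, ha]
        have e1 : 2 ^ n = k + 1 := hk
        have e2 : 2 ^ (n + 1) = 2 * k + 2 := by rw [pow_succ]; omega
        rw [e1, e2]
        push_cast
        field_simp
        ring
  intro n
  obtain ⟨p, hp, -, heq⟩ := key n
  rw [heq]
  have hpow : (0 : ℤ) < s ^ (2 ^ n) := pow_pos hs _
  have hcopn : Nat.Coprime p.natAbs (s ^ (2 ^ n)).natAbs := by
    rw [Int.natAbs_pow]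
    exact Nat.Coprime.pow_right _ (Int.isCoprime_iff_gcd_eq_one.mp hp)
  have := Rat.den_div_eq_of_coprime hpow hcopn
  rw [← this]
  push_cast
  ring
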